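/- Let H be a real Hilbert space, u ∈ H, ξ ∈ H, and Φ : H → H a bounded self-adjoint linear operator. Then the inequality ‖v‖² ≥ ‖u‖² + ⟨ξ, v − u⟩ + ⟨Φ(v), v⟩ − ⟨Φ(u), u⟩ holds for all v ∈ H if and only if Φ − Id is negative semidefinite (i.e. ⟨(Φ − Id)(v), v⟩ ≤ 0 for all v ∈ H) and ξ = 2 (Id − Φ)(u). (Dilinear subdifferential of the squared Hilbert norm.) -/

import Mathlib

private lemma quad_aux (A B : ℝ) (h : ∀ t : ℝ, 0 ≤ A * t ^ 2 + B * t) :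
    0 ≤ A ∧ B = 0 := by
  have h1 := h 1
  have h2 := h (-1)
  have hA : 0 ≤ A := by nlinarith
  refine ⟨hA, ?_⟩
  rcases eq_or_lt_of_le hA with hA0 | hA0
  · nlinarith
  · have h3 := h (-(B / (2 * A)))
    have hA' : A ≠ 0 := ne_of_gt hA0
    have he : A * (-(B / (2 * A))) ^ 2 + B * (-(B / (2 * A))) = -(B ^ 2) / (4 * A) := by
      field_simp; ring
    rw [he] at h3
    have hb2 : B ^ 2 ≤ 0 := by
      by_contra hb
      push_neg at hb
      have : -(B ^ 2) / (4 * A) < 0 := div_neg_of_neg_of_pos (by linarith) (by linarith)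
      linarith
    nlinarith

/-- **Dilinear subdifferential of the squared Hilbert norm.**
Let `H` be a real Hilbert space, `u, ξ ∈ H`, and `Φ` a bounded self-adjoint operator.
Then `‖v‖² ≥ ‖u‖² + ⟨ξ, v − u⟩ + ⟨Φ v, v⟩ − ⟨Φ u, u⟩` for all `v` if and only if
`Φ − Id` is negative semidefinite and `ξ = 2 (Id − Φ) u`. -/
theorem dilinear_subgradient_sq_norm_iff
    {H : Type*} [NormedAddCommGroup H] [InnerProductSpace ℝ H] [CompleteSpace H]
    (u ξ : H) (Φ : H →L[ℝ] H)
    (hΦsa : ∀ x y : H, (inner ℝ (Φ x) y : ℝ) = inner ℝ x (Φ y)) :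
    (∀ v : H, ‖u‖ ^ 2 + ((inner ℝ ξ (v - u) : ℝ) +
        ((inner ℝ (Φ v) v : ℝ) - (inner ℝ (Φ u) u : ℝ))) ≤ ‖v‖ ^ 2) ↔
    ((∀ v : H, (inner ℝ (Φ v - v) v : ℝ) ≤ 0) ∧ ξ = (2 : ℝ) • (u - Φ u)) := by
  set c : H := (2 : ℝ) • (u - Φ u) - ξ with hc
  have key : ∀ v : H,
      ‖v‖ ^ 2 - (‖u‖ ^ 2 + ((inner ℝ ξ (v - u) : ℝ) +
        ((inner ℝ (Φ v) v : ℝ) - (inner ℝ (Φ u) u : ℝ))))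
      = (inner ℝ ((v - u) - Φ (v - u)) (v - u) : ℝ) + (inner ℝ c (v - u) : ℝ) := by
    intro v
    have h1 := hΦsa u v
    have h2 := real_inner_comm u v
    have h3 := real_inner_comm (Φ u) v
    have h4 := hΦsa v u
    have h5 := real_inner_comm v (Φ u)
    have hv : ‖v‖ ^ 2 = (inner ℝ v v : ℝ) := (real_inner_self_eq_norm_sq v).symm
    have hu : ‖u‖ ^ 2 = (inner ℝ u u : ℝ) := (real_inner_self_eq_norm_sq u).symm
    simp only [hc, map_sub, inner_sub_left, inner_sub_right, real_inner_smul_left,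
      map_smul, hv, hu]
    linarith
  constructor
  · intro h
    have hAB : ∀ w : H, 0 ≤ (inner ℝ (w - Φ w) w : ℝ) ∧ (inner ℝ c w : ℝ) = 0 := by
      intro w
      apply quad_aux
      intro t
      have hmain := h (u + t • w)
      have hk := key (u + t • w)
      have hsub : (u + t • w) - u = t • w := by abel
      rw [hsub] at hk hmain
      have e1 : (inner ℝ ((t • w) - Φ (t • w)) (t • w) : ℝ)
          = (inner ℝ (w - Φ w) w : ℝ) * t ^ 2 := by
        rw [map_smul, ← smul_sub, real_inner_smul_left, real_inner_smul_right]
        ring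
      have e2 : (inner ℝ c (t • w) : ℝ) = (inner ℝ c w : ℝ) * t := by
        rw [real_inner_smul_right]; ring
      rw [e1, e2] at hk
      linarith
    have hc0 : c = 0 := by
      have := (hAB c).2
      exact inner_self_eq_zero.mp this
    refine ⟨fun v => ?_, ?_⟩
    · have := (hAB v).1
      have e : (inner ℝ (Φ v - v) v : ℝ) = -(inner ℝ (v - Φ v) v : ℝ) := by
        rw [← inner_neg_left]; congr 1; abel
      linarith [e ▸ neg_nonpos_of_nonneg this]
    · have : (2 : ℝ) • (u - Φ u) - ξ = 0 := hc0
      have := sub_eq_zero.mp this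
      exact this.symm
  · rintro ⟨hneg, hξ⟩ v
    have hc0 : c = 0 := by rw [hc, hξ, sub_self]
    have hk := key v
    rw [hc0, inner_zero_left] at hk
    have hA : 0 ≤ (inner ℝ ((v - u) - Φ (v - u)) (v - u) : ℝ) := by
      have := hneg (v - u)
      have e : (inner ℝ ((v - u) - Φ (v - u)) (v - u) : ℝ)
          = -(inner ℝ (Φ (v - u) - (v - u)) (v - u) : ℝ) := by
        rw [← inner_neg_left]; congr 1; abel
      linarith [e ▸ neg_nonneg_of_nonpos this]
    linarith
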